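/- With β ≠ 0, real F, G, U := 1 + F/β² − G²/(4β⁴) > 0, L_F := −1/(2√U), L_G := G/(4β²√U), the dual invariant S := 4(L_F² − L_G²)G − 8 L_F L_G F satisfies S = G. -/

import Mathlib

/-- For Born–Infeld electrodynamics, the dual invariant S built from the excitation
tensor satisfies S = G. -/
theorem bornInfeld_dual_invariant_S (β F G : ℝ) (hβ : β ≠ 0)
    (hU : 0 < 1 + F / β ^ 2 - G ^ 2 / (4 * β ^ 4)) :
    let U := 1 + F / β ^ 2 - G ^ 2 / (4 * β ^ 4)
    let L_F := -1 / (2 * Real.sqrt U)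
    let L_G := G / (4 * β ^ 2 * Real.sqrt U)
    4 * (L_F ^ 2 - L_G ^ 2) * G - 8 * L_F * L_G * F = G := by
  intro U L_F L_G
  have hs : 0 < Real.sqrt U := Real.sqrt_pos.mpr hU
  have hsq : Real.sqrt U ^ 2 = U := Real.sq_sqrt hU.le
  have hsq2 : 4 * β ^ 4 * Real.sqrt U ^ 2 = 4 * β ^ 4 + 4 * β ^ 2 * F - G ^ 2 := by
    rw [hsq]; show 4 * β ^ 4 * (1 + F / β ^ 2 - G ^ 2 / (4 * β ^ 4)) = _
    field_simp
  simp only [L_F, L_G]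
  field_simp
  linear_combination (-4*G) * hsq2
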